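/- Let J and K be real symmetric d×d matrices such that K is positive semidefinite, J − K is positive semidefinite, and J ⪰ λ·I in the Loewner order for some λ > 0. Suppose moreover that K ⪯ φ·I for some φ with 0 ≤ φ ≤ λ/2. Then det J > 0, det(J − K) > 0, and ln( det J / det(J − K) ) ≤ 2 d φ / λ. -/

import Mathlib

open Matrix

lemma psd_smul {d : ℕ} {A : Matrix (Fin d) (Fin d) ℝ} (hA : A.PosSemidef) {c : ℝ} (hc : 0 ≤ c) :
    (c • A).PosSemidef := by
  refine Matrix.PosSemidef.of_dotProduct_mulVec_nonneg ?_ (fun x => ?_)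
  · unfold Matrix.IsHermitian
    rw [conjTranspose_smul, hA.1.eq]
    simp
  · rw [smul_mulVec, dotProduct_smul]
    exact mul_nonneg hc (hA.dotProduct_mulVec_nonneg x)

lemma posdef_smul_one {d : ℕ} {c : ℝ} (hc : 0 < c) :
    (c • (1 : Matrix (Fin d) (Fin d) ℝ)).PosDef := by
  rw [smul_one_eq_diagonal]
  exact Matrix.PosDef.diagonal (fun _ => hc)

lemma one_le_det_one_add {d : ℕ} {M : Matrix (Fin d) (Fin d) ℝ} (hM : M.PosSemidef) :
    1 ≤ (1 + M).det := by
  have h1 : (1 + M).IsHermitian := Matrix.isHermitian_one.add hM.1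
  rw [h1.det_eq_prod_eigenvalues]
  have : ∀ i, 1 ≤ h1.eigenvalues i := by
    intro i
    rw [h1.eigenvalues_eq]
    set v : (Fin d) → ℝ := ⇑(h1.eigenvectorBasis i) with hv
    have h3 : star v ⬝ᵥ v = 1 := by
      have h4 : ‖h1.eigenvectorBasis i‖ = 1 := h1.eigenvectorBasis.orthonormal.1 i
      have h5 := EuclideanSpace.inner_eq_star_dotProduct (𝕜 := ℝ) (h1.eigenvectorBasis i) (h1.eigenvectorBasis i)
      rw [inner_self_eq_norm_sq_to_K, h4] at h5
      simpa using h5.symm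
    have h2 : 0 ≤ star v ⬝ᵥ (M *ᵥ v) := hM.dotProduct_mulVec_nonneg v
    rw [add_mulVec, one_mulVec, dotProduct_add, h3]
    simpa using h2
  calc (1:ℝ) = ∏ _i : Fin d, (1:ℝ) := by simp
    _ ≤ ∏ i, h1.eigenvalues i := Finset.prod_le_prod (fun _ _ => zero_le_one) (fun i _ => this i)
    _ = ∏ i, ((h1.eigenvalues i : ℝ)) := by norm_num

open scoped MatrixOrder in
lemma det_mono_psd {d : ℕ} {A B : Matrix (Fin d) (Fin d) ℝ} (hA : A.PosDef)
    (hBA : (B - A).PosSemidef) : A.det ≤ B.det := by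
  set S := CFC.sqrt A with hS
  have hSpsd : S.PosSemidef := Matrix.nonneg_iff_posSemidef.mp (CFC.sqrt_nonneg A)
  have hSS : S * S = A := CFC.sqrt_mul_sqrt_self A hA.posSemidef.nonneg
  have hdetSnn : 0 ≤ S.det := by
    rw [hSpsd.1.det_eq_prod_eigenvalues]
    refine Finset.prod_nonneg fun i _ => ?_
    simpa using hSpsd.eigenvalues_nonneg i
  have hdetSS : S.det * S.det = A.det := by rw [← det_mul, hSS]
  have hdetS : 0 < S.det := by nlinarith [hA.det_pos]
  have hSunit : IsUnit S.det := hdetS.ne'.isUnit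
  have hSherm : Sᴴ = S := hSpsd.1
  have hSinvherm : (S⁻¹)ᴴ = S⁻¹ := by rw [conjTranspose_nonsing_inv, hSherm]
  set M := S⁻¹ * (B - A) * S⁻¹ with hM
  have hMpsd : M.PosSemidef := by
    have := hBA.conjTranspose_mul_mul_same (S⁻¹)
    rwa [hSinvherm] at this
  have hB : S * (1 + M) * S = B := by
    rw [mul_add, mul_one, add_mul, hSS, hM]
    have h2 : S * (S⁻¹ * (B - A) * S⁻¹) * S = B - A := by
      rw [← mul_assoc, ← mul_assoc, mul_nonsing_inv _ hSunit, one_mul, mul_assoc,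
        nonsing_inv_mul _ hSunit, mul_one]
    rw [h2]
    abel
  calc A.det = A.det * 1 := (mul_one _).symm
    _ ≤ A.det * (1 + M).det := by
        exact mul_le_mul_of_nonneg_left (one_le_det_one_add hMpsd) hA.det_pos.le
    _ = B.det := by rw [← hB, det_mul, det_mul]; rw [← hdetSS]; ring

/-- If `K ⪰ 0`, `J - K ⪰ 0`, `J ⪰ λ I` with `λ > 0` and `K ⪯ φ I` with `0 ≤ φ ≤ λ/2`,
then `ln(det J / det(J - K)) ≤ 2 d φ / λ`. -/
theorem logdet_ratio_le {d : ℕ} (J K : Matrix (Fin d) (Fin d) ℝ) (lam φ : ℝ)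
    (hJsymm : J.IsSymm) (hKsymm : K.IsSymm)
    (hKpsd : K.PosSemidef) (hJK : (J - K).PosSemidef)
    (hlam : 0 < lam) (hJlam : (J - lam • (1 : Matrix (Fin d) (Fin d) ℝ)).PosSemidef)
    (hφ0 : 0 ≤ φ) (hφ : φ ≤ lam / 2)
    (hKφ : (φ • (1 : Matrix (Fin d) (Fin d) ℝ) - K).PosSemidef) :
    0 < J.det ∧ 0 < (J - K).det ∧
      Real.log (J.det / (J - K).det) ≤ 2 * d * φ / lam := by
  have hlamφ : 0 < lam - φ := by linarith
  -- J is positive definite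
  have hJpd : J.PosDef := by
    have := Matrix.PosDef.posSemidef_add hJlam (posdef_smul_one (d := d) hlam)
    rwa [sub_add_cancel] at this
  -- J - K is positive definite
  have hJKlam : ((J - K) - (lam - φ) • (1 : Matrix (Fin d) (Fin d) ℝ)).PosSemidef := by
    have h := hJlam.add hKφ
    have heq : (J - lam • (1 : Matrix (Fin d) (Fin d) ℝ))
        + (φ • (1 : Matrix (Fin d) (Fin d) ℝ) - K)
        = (J - K) - (lam - φ) • (1 : Matrix (Fin d) (Fin d) ℝ) := by
      rw [sub_smul]; abel
    rwa [heq] at h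
  have hJKpd : (J - K).PosDef := by
    have := Matrix.PosDef.posSemidef_add hJKlam (posdef_smul_one (d := d) hlamφ)
    rwa [sub_add_cancel] at this
  set t : ℝ := φ / (lam - φ) with htdef
  have ht0 : 0 ≤ t := div_nonneg hφ0 hlamφ.le
  have ht : t * (lam - φ) = φ := div_mul_cancel₀ _ hlamφ.ne'
  -- Loewner bound J ⪯ (1+t) (J - K)
  have h1 : (1 + t) • (J - K) - J
      = t • ((J - K) - (lam - φ) • (1 : Matrix (Fin d) (Fin d) ℝ))
        + (φ • (1 : Matrix (Fin d) (Fin d) ℝ) - K) := by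
    rw [add_smul, one_smul, smul_sub t (J - K) ((lam - φ) • (1 : Matrix (Fin d) (Fin d) ℝ)), smul_smul, ht]
    abel
  have hconv : ((1 + t) • (J - K) - J).PosSemidef := by
    rw [h1]
    exact (psd_smul hJKlam ht0).add hKφ
  have hdet : J.det ≤ (1 + t) ^ d * (J - K).det := by
    have := det_mono_psd hJpd hconv
    rwa [det_smul, Fintype.card_fin] at this
  have hdJ : 0 < J.det := hJpd.det_pos
  have hdJK : 0 < (J - K).det := hJKpd.det_pos
  refine ⟨hdJ, hdJK, ?_⟩
  rw [Real.log_div hdJ.ne' hdJK.ne']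
  have h1t : (0:ℝ) < 1 + t := by linarith
  have hlog1 : Real.log J.det ≤ Real.log ((1 + t) ^ d * (J - K).det) :=
    Real.log_le_log hdJ hdet
  rw [Real.log_mul (by positivity) hdJK.ne', Real.log_pow] at hlog1
  have hlt : Real.log (1 + t) ≤ t := by
    have := Real.log_le_sub_one_of_pos h1t; linarith
  have ht2 : t ≤ 2 * φ / lam := by
    rw [htdef, div_le_div_iff₀ hlamφ hlam]
    nlinarith
  have hd0 : (0:ℝ) ≤ (d:ℝ) := Nat.cast_nonneg d
  have e1 : (d:ℝ) * Real.log (1 + t) ≤ (d:ℝ) * t := mul_le_mul_of_nonneg_left hlt hd0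
  have e2 : (d:ℝ) * t ≤ (d:ℝ) * (2 * φ / lam) := mul_le_mul_of_nonneg_left ht2 hd0
  have e3 : (d:ℝ) * (2 * φ / lam) = 2 * d * φ / lam := by ring
  linarith
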